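/- Let Δ̃⁺ be the set of positive roots of a polarization of a finite reduced crystallographic root system Δ. Suppose γ₁, …, γ_N ∈ Δ̃⁺ are positive roots (not necessarily distinct) such that α := γ₁ + γ₂ + ⋯ + γ_N ∈ Δ̃⁺. Then for every 1 ≤ k ≤ N there exists a permutation σ of {1, …, N} with σ(1) = k such that the partial sums γ_{σ(1)} + ⋯ + γ_{σ(r)} belong to Δ̃⁺ for all 1 ≤ r ≤ N. -/

import Mathlib

open RealInnerProductSpace

variable {V : Type*} [NormedAddCommGroup V] [InnerProductSpace ℝ V]
  [FiniteDimensional ℝ V]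

/-- A finite reduced crystallographic root system in a real inner product
space: a finite set of nonzero vectors, stable under the reflections `s_α`,
with integral pairings `2(β,α)/(α,α)`, and such that the only scalar multiples
of a root which are roots are `±` that root. -/
structure IsRootSystem (Δ : Set V) : Prop where
  finite : Δ.Finite
  ne_zero : ∀ α ∈ Δ, α ≠ 0
  reflect_mem : ∀ α ∈ Δ, ∀ β ∈ Δ, β - (2 * ⟪β, α⟫ / ⟪α, α⟫) • α ∈ Δ
  crystallographic : ∀ α ∈ Δ, ∀ β ∈ Δ, ∃ n : ℤ, (n : ℝ) = 2 * ⟪β, α⟫ / ⟪α, α⟫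
  reduced : ∀ α ∈ Δ, ∀ t : ℝ, t • α ∈ Δ → t = 1 ∨ t = -1

namespace IsRootSystem

variable {Δ : Set V}

lemma inner_self_pos' (hΔ : IsRootSystem Δ) {x : V} (hx : x ∈ Δ) : 0 < ⟪x, x⟫ :=
  lt_of_le_of_ne real_inner_self_nonneg
    (Ne.symm fun h => hΔ.ne_zero x hx (inner_self_eq_zero.mp h))

lemma neg_mem (hΔ : IsRootSystem Δ) {x : V} (hx : x ∈ Δ) : -x ∈ Δ := by
  have h := hΔ.reflect_mem x hx x hx
  have hxx : (⟪x, x⟫ : ℝ) ≠ 0 := ne_of_gt (hΔ.inner_self_pos' hx)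
  have h2 : (2 * ⟪x, x⟫ / ⟪x, x⟫ : ℝ) = 2 := by field_simp
  rw [h2] at h
  have : x - (2 : ℝ) • x = -x := by
    rw [two_smul]; abel
  rwa [this] at h

lemma sub_mem (hΔ : IsRootSystem Δ) {x y : V} (hx : x ∈ Δ) (hy : y ∈ Δ)
    (hxy : 0 < ⟪x, y⟫) (hne : x ≠ y) : x - y ∈ Δ := by
  have hxx := hΔ.inner_self_pos' hx
  have hyy := hΔ.inner_self_pos' hy
  obtain ⟨n, hn⟩ := hΔ.crystallographic y hy x hx
  obtain ⟨m, hm⟩ := hΔ.crystallographic x hx y hy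
  have hyx : ⟪y, x⟫ = ⟪x, y⟫ := real_inner_comm x y
  rw [hyx] at hm
  have hn0 : (0 : ℝ) < n := by rw [hn]; positivity
  have hm0 : (0 : ℝ) < m := by rw [hm]; positivity
  have hn1 : 1 ≤ n := by exact_mod_cast hn0
  have hm1 : 1 ≤ m := by exact_mod_cast hm0
  have hCS : ⟪x, y⟫ * ⟪x, y⟫ ≤ ⟪x, x⟫ * ⟪y, y⟫ := real_inner_mul_inner_self_le x y
  have hstrict : ⟪x, y⟫ * ⟪x, y⟫ < ⟪x, x⟫ * ⟪y, y⟫ := by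
    rcases lt_or_eq_of_le hCS with h | h
    · exact h
    · exfalso
      set z := ⟪y, y⟫ • x - ⟪x, y⟫ • y with hz
      have e1 : ⟪z, z⟫ = ⟪y, y⟫ * ⟪y, y⟫ * ⟪x, x⟫ - 2 * ⟪y, y⟫ * (⟪x, y⟫ * ⟪x, y⟫)
          + ⟪x, y⟫ * ⟪x, y⟫ * ⟪y, y⟫ := by
        simp only [hz, inner_sub_left, inner_sub_right, real_inner_smul_left,
          real_inner_smul_right, hyx]
        ring
      have hzz : ⟪z, z⟫ = 0 := by
        rw [e1]; linear_combination (- (⟪y, y⟫ : ℝ)) * h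
      have hz0 : z = 0 := inner_self_eq_zero.mp hzz
      have hxeq : x = (⟪x, y⟫ / ⟪y, y⟫) • y := by
        have h2 : ⟪y, y⟫ • x = ⟪x, y⟫ • y := by
          have h3 := sub_eq_zero.mp hz0
          linear_combination (norm := module) h3
        rw [div_eq_inv_mul, mul_smul, ← h2, inv_smul_smul₀ (ne_of_gt hyy)]
      have ht := hΔ.reduced y hy (⟪x, y⟫ / ⟪y, y⟫) (by rw [← hxeq]; exact hx)
      have htpos : 0 < ⟪x, y⟫ / ⟪y, y⟫ := by positivity
      rcases ht with h1 | h1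
      · rw [h1, one_smul] at hxeq; exact hne hxeq
      · rw [h1] at htpos; norm_num at htpos
  have hnm : (n : ℝ) * m < 4 := by
    rw [hn, hm, div_mul_div_comm, div_lt_iff₀ (by positivity)]
    nlinarith [hstrict]
  have hnm' : n * m < 4 := by exact_mod_cast hnm
  have hcase : n = 1 ∨ m = 1 := by
    by_contra hc
    push_neg at hc
    have h2 : 2 ≤ n := by omega
    have h3 : 2 ≤ m := by omega
    nlinarith
  rcases hcase with h1 | h1
  · have h := hΔ.reflect_mem y hy x hx
    rw [← hn, h1] at h
    simpa using h
  · have h := hΔ.reflect_mem x hx y hy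
    rw [hyx, ← hm, h1] at h
    simp only [Int.cast_one, one_smul] at h
    have := hΔ.neg_mem h
    simpa using this

lemma add_mem (hΔ : IsRootSystem Δ) {x y : V} (hx : x ∈ Δ) (hy : y ∈ Δ) (hxy : ⟪x, y⟫ < 0) (hne : x + y ≠ 0) :
    x + y ∈ Δ := by
  have h := hΔ.sub_mem hx (hΔ.neg_mem hy) (by rw [inner_neg_right]; linarith)
    (by intro h; apply hne; rw [h]; abel)
  simpa [sub_neg_eq_add] using h

end IsRootSystem

lemma list_sum_nonpos : ∀ (l : List ℝ), (∀ a ∈ l, a ≤ 0) → l.sum ≤ 0 := by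
  intro l
  induction l with
  | nil => simp
  | cons a t ih =>
    intro h
    have h1 := h a List.mem_cons_self
    have h2 := ih fun b hb => h b (List.mem_cons_of_mem _ hb)
    simp only [List.sum_cons]
    linarith

lemma inner_list_sum (x : V) (l : List V) :
    ⟪x, l.sum⟫ = (l.map fun y => ⟪x, y⟫).sum := by
  induction l with
  | nil => simp
  | cons a t ih => simp [inner_add_right, ih]

lemma inner_list_sum' (x : V) (l : List V) :
    ⟪l.sum, x⟫ = (l.map fun y => ⟪y, x⟫).sum := by
  induction l with
  | nil => simp
  | cons a t ih => simp [inner_add_left, ih]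

lemma reorder_aux {Δ : Set V} (hΔ : IsRootSystem Δ) (f : V →ₗ[ℝ] ℝ)
    {ι : Type*} [DecidableEq ι] (v : ι → V)
    (hvΔ : ∀ i, v i ∈ Δ) (hvf : ∀ i, 0 < f (v i)) :
    ∀ (L : ℕ) (l : List ι) (x : V), l.length ≤ L → x ∈ Δ → 0 < f x →
      (x + (l.map v).sum ∈ Δ) →
      ∃ m : List ι, m.Perm l ∧ ∀ n : ℕ, (x + ((m.map v).take n).sum) ∈ Δ := by
  have hfsum : ∀ l : List ι, 0 ≤ f ((l.map v).sum) := by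
    intro l
    rw [map_list_sum]
    apply List.sum_nonneg
    intro a ha
    simp only [List.map_map, List.mem_map] at ha
    obtain ⟨i, _, rfl⟩ := ha
    exact le_of_lt (hvf i)
  intro L
  induction L with
  | zero =>
    intro l x hlen hxΔ hxf hsum
    have hl : l = [] := List.eq_nil_of_length_eq_zero (Nat.le_zero.mp hlen)
    subst hl
    exact ⟨[], List.Perm.refl _, fun n => by simpa using hxΔ⟩
  | succ L ih =>
    rintro (_ | ⟨y0, l0⟩) x hlen hxΔ hxf hsum
    · exact ⟨[], List.Perm.refl _, fun n => by simpa using hxΔ⟩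
    set l : List ι := y0 :: l0 with hl
    have hfl : 0 < f ((l.map v).sum) := by
      have h1 : (l.map v).sum = v y0 + ((l0.map v).sum) := by simp [hl]
      rw [h1, map_add]
      have := hfsum l0
      have := hvf y0
      linarith
    -- generic facts about erasing an element
    have herase : ∀ y ∈ l, (l.map v).sum = v y + (((l.erase y).map v).sum) := by
      intro y hy
      have hp : l.Perm (y :: l.erase y) := List.perm_cons_erase hy
      have := (hp.map v).sum_eq
      simpa using this
    by_cases h1 : ∃ y ∈ l, x + v y ∈ Δ
    · obtain ⟨y, hyl, hxyΔ⟩ := h1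
      have hlen' : (l.erase y).length ≤ L := by
        have h2 := List.length_erase_of_mem hyl
        have h3 : l.length = l0.length + 1 := by simp [hl]
        omega
      have hsum' : (x + v y) + (((l.erase y).map v).sum) ∈ Δ := by
        rw [add_assoc, ← herase y hyl]; exact hsum
      have hxyf : 0 < f (x + v y) := by
        rw [map_add]; have := hvf y; linarith
      obtain ⟨m', hm'p, hm'pre⟩ := ih (l.erase y) (x + v y) hlen' hxyΔ hxyf hsum'
      refine ⟨y :: m', (hm'p.cons y).trans (List.perm_cons_erase hyl).symm, ?_⟩
      intro n
      cases n with
      | zero => simpa using hxΔ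
      | succ n =>
        simp only [List.map_cons, List.take_succ_cons, List.sum_cons, ← add_assoc]
        exact hm'pre n
    · push_neg at h1
      set α := x + (l.map v).sum with hα
      have hαf : 0 < f α := by
        rw [hα, map_add]
        have := hfsum l
        linarith
      have hsubf : ∀ y ∈ l, 0 < f (α - v y) := by
        intro y hy
        have h2 := herase y hy
        have h3 : α - v y = x + (((l.erase y).map v).sum) := by
          rw [hα, h2]; abel
        rw [h3, map_add]
        have := hfsum (l.erase y)
        linarith
      by_cases h2 : ∃ y ∈ l, α - v y ∈ Δ
      · obtain ⟨y, hyl, hpeel⟩ := h2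
        have hlen' : (l.erase y).length ≤ L := by
          have h2 := List.length_erase_of_mem hyl
          have h3 : l.length = l0.length + 1 := by simp [hl]
          omega
        have hsum' : x + (((l.erase y).map v).sum) ∈ Δ := by
          have h3 : x + (((l.erase y).map v).sum) = α - v y := by
            rw [hα, herase y hyl]; abel
          rw [h3]; exact hpeel
        obtain ⟨m', hm'p, hm'pre⟩ := ih (l.erase y) x hlen' hxΔ hxf hsum'
        refine ⟨m' ++ [y],
          ((List.perm_append_singleton y m').trans (hm'p.cons y)).trans
            (List.perm_cons_erase hyl).symm, ?_⟩
        intro n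
        by_cases hn : n ≤ (m'.map v).length
        · rw [List.map_append, List.take_append_of_le_length hn]
          exact hm'pre n
        · push_neg at hn
          rw [List.map_append, List.take_of_length_le (by simp at hn ⊢; omega)]
          have h3 : x + (List.map v m' ++ List.map v [y]).sum = α := by
            rw [List.sum_append, (hm'p.map v).sum_eq, hα, herase y hyl]
            simp only [List.map_cons, List.map_nil, List.sum_cons, List.sum_nil, add_zero]
            abel
          rw [h3]; exact hsum
      · exfalso
        push_neg at h2
        have hnonneg : ∀ y ∈ l, 0 ≤ ⟪x, v y⟫ := by
          intro y hy
          by_contra hneg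
          push_neg at hneg
          refine h1 y hy (hΔ.add_mem hxΔ (hvΔ y) hneg ?_)
          intro h0
          have : f (x + v y) = 0 := by rw [h0, map_zero]
          rw [map_add] at this
          have := hvf y
          linarith
        have hnonpos : ∀ y ∈ l, ⟪α, v y⟫ ≤ 0 := by
          intro y hy
          by_contra hpos
          push_neg at hpos
          refine h2 y hy (hΔ.sub_mem hsum (hvΔ y) hpos ?_)
          intro h0
          have := hsubf y hy
          rw [h0] at this
          simp at this
        set S := (l.map v).sum with hS
        have hxS : 0 ≤ ⟪x, S⟫ := by
          rw [hS, inner_list_sum]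
          apply List.sum_nonneg
          intro a ha
          simp only [List.map_map, List.mem_map] at ha
          obtain ⟨i, hi, rfl⟩ := ha
          exact hnonneg i hi
        have hαS : ⟪α, S⟫ ≤ 0 := by
          rw [hS, inner_list_sum]
          apply list_sum_nonpos
          intro a ha
          rw [List.map_map] at ha
          obtain ⟨i, hi, rfl⟩ := List.mem_map.mp ha
          exact hnonpos i hi
        have hxα : ⟪x, α⟫ = ⟪x, x⟫ + ⟪x, S⟫ := by rw [hα, inner_add_right]
        have hαx : ⟪α, α⟫ = ⟪α, x⟫ + ⟪α, S⟫ := by rw [hα, inner_add_right]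
        have hcomm : ⟪α, x⟫ = ⟪x, α⟫ := real_inner_comm x α
        have hxx := hΔ.inner_self_pos' hxΔ
        have hzero : ⟪x - α, x - α⟫ ≤ 0 := by
          rw [inner_sub_left, inner_sub_right, inner_sub_right]
          linarith
        have hxeqα : x = α := sub_eq_zero.mp (inner_self_eq_zero.mp
          (le_antisymm hzero real_inner_self_nonneg))
        have : f x = f α := by rw [hxeqα]
        rw [hα, map_add] at this
        linarith


/-- Let `Δ̃⁺` be the positive roots of a polarization (given by a linear
functional `f` nonvanishing on roots) of a finite reduced crystallographic root
system `Δ`.  If `γ₁,…,γ_N ∈ Δ̃⁺` (not necessarily distinct) are such that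
`α = γ₁ + ⋯ + γ_N ∈ Δ̃⁺`, then for every `1 ≤ k ≤ N` there is a permutation `σ`
of `{1,…,N}` with `σ(1) = k` such that all partial sums
`γ_{σ(1)} + ⋯ + γ_{σ(r)}` lie in `Δ̃⁺`. -/
theorem positive_root_sum_reorder (Δ : Set V) (hΔ : IsRootSystem Δ)
    (f : V →ₗ[ℝ] ℝ) (hf : ∀ α ∈ Δ, f α ≠ 0)
    (P : Set V) (hP : P = {α | α ∈ Δ ∧ 0 < f α})
    {N : ℕ} (hN : 0 < N) (γ : Fin N → V)
    (hγ : ∀ j : Fin N, γ j ∈ P)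
    (hα : (∑ j, γ j) ∈ P) (k : Fin N) :
    ∃ σ : Equiv.Perm (Fin N), σ ⟨0, hN⟩ = k ∧
      ∀ r : Fin N,
        (∑ j ∈ Finset.univ.filter (fun j => j ≤ r), γ (σ j)) ∈ P := by
  subst hP
  have hγΔ : ∀ j, γ j ∈ Δ := fun j => (hγ j).1
  have hγf : ∀ j, 0 < f (γ j) := fun j => (hγ j).2
  classical
  set l : List (Fin N) := (List.finRange N).erase k with hl
  have hk : k ∈ List.finRange N := List.mem_finRange k
  have hperm : (List.finRange N).Perm (k :: l) := List.perm_cons_erase hk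
  have hsum0 : (∑ j, γ j) = γ k + (l.map γ).sum := by
    rw [← List.sum_ofFn, List.ofFn_eq_map, (hperm.map γ).sum_eq]
    simp
  have hsumΔ : γ k + (l.map γ).sum ∈ Δ := by rw [← hsum0]; exact hα.1
  obtain ⟨m, hmp, hmpre⟩ := reorder_aux hΔ f γ hγΔ hγf l.length l (γ k) le_rfl
    (hγΔ k) (hγf k) hsumΔ
  set L : List (Fin N) := k :: m with hLdef
  have hLperm : L.Perm (List.finRange N) := (hmp.cons k).trans hperm.symm
  have hLlen : L.length = N := by rw [hLperm.length_eq, List.length_finRange]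
  have hLnd : L.Nodup := hLperm.nodup_iff.mpr (List.nodup_finRange N)
  have hinj : Function.Injective L.get := List.nodup_iff_injective_get.mp hLnd
  have hginj : Function.Injective (fun j : Fin N => L.get (Fin.cast hLlen.symm j)) := by
    intro a b hab
    have := hinj hab
    simpa [Fin.ext_iff] using this
  let σ : Equiv.Perm (Fin N) :=
    Equiv.ofBijective _ (Finite.injective_iff_bijective.mp hginj)
  have hσ : ∀ j : Fin N, σ j = L.get (Fin.cast hLlen.symm j) := fun j => rfl
  have hmlen : m.length = N - 1 := by
    have : L.length = m.length + 1 := by simp [hLdef]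
    omega
  have hσ0 : σ ⟨0, hN⟩ = k := by rw [hσ]; rfl
  refine ⟨σ, hσ0, ?_⟩
  have key : ∀ (n : ℕ) (hn : n < N),
      (∑ j ∈ Finset.univ.filter (fun j => j ≤ (⟨n, hn⟩ : Fin N)), γ (σ j))
        = γ k + ((m.map γ).take n).sum := by
    intro n
    induction n with
    | zero =>
      intro hn
      have hfil : Finset.univ.filter (fun j : Fin N => j ≤ (⟨0, hn⟩ : Fin N))
          = {(⟨0, hn⟩ : Fin N)} := by
        ext j
        simp only [Finset.mem_filter, Finset.mem_univ, true_and, Finset.mem_singleton,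
          Fin.le_def, Fin.ext_iff]
        omega
      rw [hfil, Finset.sum_singleton, hσ0]
      simp
    | succ n ihn =>
      intro hn
      have hn' : n < N := by omega
      have hfil : Finset.univ.filter (fun j : Fin N => j ≤ (⟨n + 1, hn⟩ : Fin N))
          = insert (⟨n + 1, hn⟩ : Fin N)
              (Finset.univ.filter (fun j : Fin N => j ≤ (⟨n, hn'⟩ : Fin N))) := by
        ext j
        simp only [Finset.mem_filter, Finset.mem_univ, true_and, Finset.mem_insert,
          Fin.le_def, Fin.ext_iff]
        omega
      have hnotmem : (⟨n + 1, hn⟩ : Fin N) ∉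
          Finset.univ.filter (fun j : Fin N => j ≤ (⟨n, hn'⟩ : Fin N)) := by
        simp [Fin.le_def]
      rw [hfil, Finset.sum_insert hnotmem, ihn hn']
      have hnm : n < (m.map γ).length := by
        rw [List.length_map]; omega
      rw [List.sum_take_succ _ n hnm]
      have hget : (m.map γ)[n] = γ (σ ⟨n + 1, hn⟩) := by
        rw [hσ]
        have : L.get (Fin.cast hLlen.symm ⟨n + 1, hn⟩) = m.get ⟨n, by omega⟩ := by
          simp [hLdef]
        rw [this, List.getElem_map]
        simp
      rw [hget]
      abel
  intro r
  have hr := key r.val r.isLt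
  rw [Fin.eta] at hr
  rw [hr]
  constructor
  · exact hmpre r.val
  · rw [map_add]
    have h0 : 0 ≤ f ((m.map γ).take r.val).sum := by
      rw [map_list_sum]
      apply List.sum_nonneg
      intro a ha
      obtain ⟨b, hb, rfl⟩ := List.mem_map.mp ha
      obtain ⟨i, _, rfl⟩ := List.mem_map.mp (List.mem_of_mem_take hb)
      exact le_of_lt (hγf i)
    have := hγf k
    linarith
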